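/- Let Ω ⊆ ℝ^d be open with Ω̄ ≠ ℝ^d, D ⊆ ∂Ω closed, Γ := ∂Ω \ D nonempty, and suppose the (ε,δ,K,λ)-conditions of Assumption hold: for x,y ∈ Ω with |x−y| < δ there is a curve γ in Ξ := ℝ^d \ Γ̄ with length(γ) ≤ ε^{-1}|x−y|, dist(z,Γ) ≥ ε|x−z||y−z|/|x−y| on γ, and qhd_Ξ(z, Ω) ≤ K on γ; components of Ω meeting Γ have diameter ≥ λδ. For Q ∈ 𝒲_e (exterior Whitney cubes of Ω̄ with diam(Q) ≤ Aδ and dist(Q,Γ) < B dist(Q, ∂Ω\Γ)), there exists a connected component Ω_m of Ω with ∂Ω_m ∩ Γ ≠ ∅ and a point x ∈ Ω_m with dist(x, Q) ≤ 5B diam(Q). -/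

import Mathlib

open Set Metric MeasureTheory ENNReal NNReal

noncomputable section

abbrev Euc (d : ℕ) := EuclideanSpace ℝ (Fin d)

/-- The (extended) distance between two sets, `⊤` if one of them behaves emptily. -/
noncomputable def setEDist {α : Type*} [PseudoEMetricSpace α] (A B : Set α) : ℝ≥0∞ :=
  ⨅ a ∈ A, EMetric.infEdist a B

/-- The distance between two sets, as a real number. -/
noncomputable def setDist {α : Type*} [PseudoEMetricSpace α] (A B : Set α) : ℝ :=
  (setEDist A B).toReal

/-- The closed axis-parallel cube with center `c` and half side length `r`. -/
def cube (d : ℕ) (c : Euc d) (r : ℝ) : Set (Euc d) :=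
  {x : Euc d | ∀ i, |x i - c i| ≤ r}

/-- A closed axis-parallel (nondegenerate) cube in `ℝ^d`. -/
def IsClosedCube {d : ℕ} (Q : Set (Euc d)) : Prop :=
  ∃ (c : Euc d) (r : ℝ), 0 < r ∧ Q = cube d c r

/-- A dyadic cube: a cube of the mesh determined by the lattice `2^(-k) ℤ^d`. -/
def IsDyadicCube {d : ℕ} (Q : Set (Euc d)) : Prop :=
  ∃ (k : ℤ) (m : Fin d → ℤ),
    Q = {x : Euc d | ∀ i, (m i : ℝ) * 2 ^ (-k) ≤ x i ∧ x i ≤ ((m i : ℝ) + 1) * 2 ^ (-k)}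

/-- `𝒲` is a Whitney decomposition of the open set `Ξ`: a collection of dyadic cubes with
pairwise disjoint interiors covering `Ξ`, such that `diam Q ≤ dist(Q, Ξᶜ) ≤ 4 diam Q`,
and intersecting cubes have comparable diameters. -/
def IsWhitneyDecomp {d : ℕ} (Ξ : Set (Euc d)) (𝒲 : Set (Set (Euc d))) : Prop :=
  (∀ Q ∈ 𝒲, IsDyadicCube Q) ∧
  (⋃₀ 𝒲 = Ξ) ∧
  (𝒲.Pairwise fun Q Q' => interior Q ∩ interior Q' = ∅) ∧
  (∀ Q ∈ 𝒲, Metric.diam Q ≤ setDist Q Ξᶜ ∧ setDist Q Ξᶜ ≤ 4 * Metric.diam Q) ∧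
  (∀ Q ∈ 𝒲, ∀ Q' ∈ 𝒲, (Q ∩ Q').Nonempty → Metric.diam Q ≤ 4 * Metric.diam Q')

/-- A rectifiable curve in `Ξ` joining `x` to `y`, parametrized over `[0,1]`. -/
def IsRectCurve {d : ℕ} (Ξ : Set (Euc d)) (x y : Euc d) (γ : ℝ → Euc d) : Prop :=
  ContinuousOn γ (Icc 0 1) ∧ γ 0 = x ∧ γ 1 = y ∧ MapsTo γ (Icc 0 1) Ξ ∧
    eVariationOn γ (Icc 0 1) < ⊤

/-- The quasihyperbolic distance of `x, y` in `Ξ`: the infimum over rectifiable curves in `Ξ`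
joining `x` and `y` of `∫_γ dist(z, ∂Ξ)⁻¹ |dz|`.  The infimum over the empty set is `∞`,
and (real) division by `dist(z, ∅) = 0` realizes the convention `1/∞ = 0` for `∂Ξ = ∅`. -/
noncomputable def qhd {d : ℕ} (Ξ : Set (Euc d)) (x y : Euc d) : ℝ≥0∞ :=
  ⨅ (γ : ℝ → Euc d) (_ : IsRectCurve Ξ x y γ),
    ∫⁻ t in Icc (0:ℝ) 1,
      ENNReal.ofReal (‖derivWithin γ (Icc 0 1) t‖ / infDist (γ t) (frontier Ξ))

/-- Quasihyperbolic distance from a point to a set. -/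
noncomputable def qhdSet {d : ℕ} (Ξ : Set (Euc d)) (x : Euc d) (S : Set (Euc d)) : ℝ≥0∞ :=
  ⨅ y ∈ S, qhd Ξ x y

/-- A rectifiable curve joining `x` and `y` in `ℝ^d \ Γ̄` satisfying the length condition (LC)
`length(γ) ≤ ε⁻¹ |x - y|` and the carrot (cigar) condition (CC)
`dist(z, Γ) ≥ ε |x - z| |y - z| / |x - y|` for all `z ∈ γ`. -/
def CarrotPath {d : ℕ} (Γ : Set (Euc d)) (ε : ℝ) (x y : Euc d) (γ : ℝ → Euc d) : Prop :=
  ContinuousOn γ (Icc 0 1) ∧ γ 0 = x ∧ γ 1 = y ∧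
  MapsTo γ (Icc 0 1) (closure Γ)ᶜ ∧
  eVariationOn γ (Icc 0 1) ≤ ENNReal.ofReal (ε⁻¹ * dist x y) ∧
  ∀ t ∈ Icc (0:ℝ) 1,
    ENNReal.ofReal (ε * (dist x (γ t) * dist y (γ t)) / dist x y) ≤
      EMetric.infEdist (γ t) Γ

/-- Assumption 2.2 of the paper: with `Γ := ∂Ω \ D` and `Ξ := ℝ^d \ Γ̄`, any two points of `Ω`
at distance `< δ` can be joined by a rectifiable curve in `Ξ` satisfying the length condition
(LC), the carrot condition (CC) and the quasihyperbolic distance condition (QHD)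
`qhd_Ξ(z, Ω) ≤ K`; moreover every connected component of `Ω` whose boundary meets `Γ`
has diameter at least `λ δ` (DC). -/
def EpsDeltaAssumption {d : ℕ} (Ω D : Set (Euc d)) (ε : ℝ) (δ : ℝ≥0∞) (K lam : ℝ) : Prop :=
  (∀ x ∈ Ω, ∀ y ∈ Ω, edist x y < δ →
    ∃ γ : ℝ → Euc d, CarrotPath (frontier Ω \ D) ε x y γ ∧
      ∀ t ∈ Icc (0:ℝ) 1,
        qhdSet (closure (frontier Ω \ D))ᶜ (γ t) Ω ≤ ENNReal.ofReal K) ∧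
  (∀ x ∈ Ω, (frontier (connectedComponentIn Ω x) ∩ (frontier Ω \ D)).Nonempty →
      ENNReal.ofReal lam * δ ≤ EMetric.diam (connectedComponentIn Ω x))


/-- A preconnected set meeting both `t` and its complement meets `frontier t`. -/
lemma my_inter_frontier_nonempty {X : Type*} [TopologicalSpace X] {s t : Set X}
    (hs : IsPreconnected s) (h1 : (s ∩ t).Nonempty) (h2 : (s \ t).Nonempty) :
    (s ∩ frontier t).Nonempty := by
  by_contra h
  rw [not_nonempty_iff_eq_empty] at h
  have hsub : s ⊆ interior t ∪ (closure t)ᶜ := by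
    intro z hz
    have hzf : z ∉ frontier t := fun hf => (eq_empty_iff_forall_notMem.mp h z) ⟨hz, hf⟩
    by_cases hzt : z ∈ closure t
    · exact Or.inl (by rw [← closure_diff_frontier]; exact ⟨hzt, hzf⟩)
    · exact Or.inr hzt
  have hdisj : Disjoint (interior t) (closure t)ᶜ :=
    Set.disjoint_compl_right_iff_subset.mpr (interior_subset.trans subset_closure)
  rcases hs.subset_or_subset isOpen_interior isClosed_closure.isOpen_compl hdisj hsub with hc | hc
  · obtain ⟨y, hys, hyt⟩ := h2
    exact hyt (interior_subset (hc hys))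
  · obtain ⟨x, hxs, hxt⟩ := h1
    exact (hc hxs) (subset_closure hxt)

/-- The frontier of a connected component of an open set is contained in the frontier. -/
lemma my_frontier_ccIn_subset {d : ℕ} {Ω : Set (Euc d)} (hΩ : IsOpen Ω)
    (x : Euc d) : frontier (connectedComponentIn Ω x) ⊆ frontier Ω := by
  set U := connectedComponentIn Ω x with hU
  have hUo : IsOpen U := hΩ.connectedComponentIn
  intro y hy
  rw [hUo.frontier_eq] at hy
  obtain ⟨hyc, hyU⟩ := hy
  have hycl : y ∈ closure Ω := closure_mono (connectedComponentIn_subset Ω x) hyc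
  rw [hΩ.frontier_eq]
  refine ⟨hycl, fun hyΩ => hyU ?_⟩
  have hV : IsOpen (connectedComponentIn Ω y) := hΩ.connectedComponentIn
  have hyV : y ∈ connectedComponentIn Ω y := mem_connectedComponentIn hyΩ
  obtain ⟨z, hzV, hzU⟩ := mem_closure_iff.mp hyc _ hV hyV
  have h1 := connectedComponentIn_eq hzV
  have h2 := connectedComponentIn_eq hzU
  rw [hU, h2, ← h1]
  exact hyV

/-- A nondegenerate dyadic cube is nonempty, bounded, and has positive diameter. -/
lemma my_dyadic_facts {d : ℕ} (hd : 0 < d) {Q : Set (Euc d)} (h : IsDyadicCube Q) :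
    Q.Nonempty ∧ Bornology.IsBounded Q ∧ 0 < Metric.diam Q := by
  obtain ⟨k, m, rfl⟩ := h
  set t : ℝ := 2 ^ (-k) with ht
  have htpos : 0 < t := by positivity
  set a : Euc d := WithLp.toLp 2 (fun i => (m i : ℝ) * t : Fin d → ℝ) with ha
  set b : Euc d := WithLp.toLp 2 (fun i => ((m i : ℝ) + 1) * t : Fin d → ℝ) with hb
  have haQ : ∀ i : Fin d, (m i : ℝ) * t ≤ a i ∧ a i ≤ ((m i : ℝ) + 1) * t := by
    intro i
    refine ⟨le_refl _, ?_⟩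
    show (m i : ℝ) * t ≤ ((m i : ℝ) + 1) * t
    nlinarith
  have hbQ : ∀ i : Fin d, (m i : ℝ) * t ≤ b i ∧ b i ≤ ((m i : ℝ) + 1) * t := by
    intro i
    refine ⟨?_, le_refl _⟩
    show (m i : ℝ) * t ≤ ((m i : ℝ) + 1) * t
    nlinarith
  have hbdd : Bornology.IsBounded
      {x : Euc d | ∀ i, (m i : ℝ) * t ≤ x i ∧ x i ≤ ((m i : ℝ) + 1) * t} := by
    apply (Metric.isBounded_closedBall (x := a) (r := Real.sqrt d * t)).subset
    intro x hx
    have hdist : dist x a ≤ Real.sqrt d * t := by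
      rw [EuclideanSpace.dist_eq]
      have hsum : ∑ i, dist (x i) (a i) ^ 2 ≤ (d : ℝ) * t ^ 2 := by
        calc ∑ i, dist (x i) (a i) ^ 2 ≤ ∑ _i : Fin d, t ^ 2 := by
              apply Finset.sum_le_sum
              intro i _
              have h1 := (hx i).1
              have h2 := (hx i).2
              have : dist (x i) (a i) ≤ t := by
                rw [Real.dist_eq, abs_le]
                constructor
                · simp only [ha]
                  nlinarith
                · simp only [ha]
                  nlinarith
              nlinarith [dist_nonneg (x := x i) (y := a i)]
          _ = (d : ℝ) * t ^ 2 := by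
              rw [Finset.sum_const, Finset.card_univ, Fintype.card_fin, nsmul_eq_mul]
      calc Real.sqrt (∑ i, dist (x i) (a i) ^ 2) ≤ Real.sqrt ((d : ℝ) * t ^ 2) :=
            Real.sqrt_le_sqrt hsum
        _ = Real.sqrt d * t := by
            rw [Real.sqrt_mul (by positivity), Real.sqrt_sq htpos.le]
    exact Metric.mem_closedBall.mpr hdist
  have hne : a ≠ b := by
    intro hab
    have := congrArg (fun v : Euc d => v ⟨0, hd⟩) hab
    simp only [ha, hb] at this
    nlinarith
  have hdab : 0 < dist a b := dist_pos.mpr hne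
  exact ⟨⟨a, haQ⟩, hbdd, lt_of_lt_of_le hdab (Metric.dist_le_diam_of_mem hbdd haQ hbQ)⟩

lemma my_setEDist_le {α : Type*} [PseudoEMetricSpace α] {A : Set α} (B : Set α) {a : α}
    (ha : a ∈ A) : setEDist A B ≤ EMetric.infEdist a B := by
  rw [setEDist]
  exact iInf₂_le a ha


/-- Point in a Neumann component: under the `(ε, δ, K, λ)`-assumption, for every exterior
cube `Q ∈ 𝒲_e` (a Whitney cube of `ℝ^d \ Ω̄` with `diam Q ≤ Aδ` and
`dist(Q, Γ) < B dist(Q, ∂Ω \ Γ)`) there are a connected component `Ω_m` of `Ω` with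
`∂Ω_m ∩ Γ ≠ ∅` and a point `x ∈ Ω_m` with `dist(x, Q) ≤ 5 B diam Q`. -/
theorem point_in_neumann_component {d : ℕ} (hd : 0 < d) (Ω : Set (Euc d))
    (hΩ : IsOpen Ω) (hΩne : Ω.Nonempty) (hncl : closure Ω ≠ univ)
    (D : Set (Euc d)) (hD : IsClosed D) (hDsub : D ⊆ frontier Ω)
    (hΓne : (frontier Ω \ D).Nonempty)
    (ε : ℝ) (hε : 0 < ε) (hε1 : ε ≤ 1) (δ : ℝ≥0∞) (hδ : 0 < δ) (K lam : ℝ)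
    (hass : EpsDeltaAssumption Ω D ε δ K lam)
    (𝒲 : Set (Set (Euc d))) (hW : IsWhitneyDecomp (closure Ω)ᶜ 𝒲)
    (A B : ℝ) (hA : 0 < A) (hB : 2 < B)
    (Q : Set (Euc d)) (hQ : Q ∈ 𝒲)
    (hQdiam : ENNReal.ofReal (Metric.diam Q) ≤ ENNReal.ofReal A * δ)
    (hQdist : setEDist Q (frontier Ω \ D) <
      ENNReal.ofReal B * setEDist Q (frontier Ω \ (frontier Ω \ D))) :
    ∃ x ∈ Ω, (frontier (connectedComponentIn Ω x) ∩ (frontier Ω \ D)).Nonempty ∧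
      infDist x Q ≤ 5 * B * Metric.diam Q := by
  classical
  set Γ : Set (Euc d) := frontier Ω \ D with hΓdef
  obtain ⟨hQne, hQbd, hQdpos⟩ := my_dyadic_facts hd (hW.1 Q hQ)
  set dQ : ℝ := Metric.diam Q with hdQ
  have hBpos : 0 < B := by linarith
  have hQsub : Q ⊆ (closure Ω)ᶜ := by
    rw [← hW.2.1]
    exact subset_sUnion_of_mem hQ
  have hWd := (hW.2.2.2.1 Q hQ).2
  rw [compl_compl] at hWd
  have hclne : (closure Ω).Nonempty := hΩne.closure
  have hfin : setEDist Q (closure Ω) ≠ ⊤ := by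
    obtain ⟨q0, hq0⟩ := hQne
    exact ne_top_of_le_ne_top (Metric.infEdist_ne_top hclne) (my_setEDist_le _ hq0)
  have h1 : setEDist Q (closure Ω) ≤ ENNReal.ofReal (4 * dQ) := by
    rw [ENNReal.le_ofReal_iff_toReal_le hfin (by positivity)]
    exact hWd
  have h2 : setEDist Q (closure Ω) < ENNReal.ofReal (4 * dQ + dQ / 4) :=
    lt_of_le_of_lt h1 (by rw [ENNReal.ofReal_lt_ofReal_iff (by positivity)]; linarith)
  simp only [setEDist, iInf_lt_iff] at h2
  obtain ⟨q, hqQ, hq⟩ := h2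
  obtain ⟨y, hy, hqy⟩ := EMetric.infEdist_lt_iff.mp hq
  have hqy' : dist q y < 4 * dQ + dQ / 4 := edist_lt_ofReal.mp hqy
  obtain ⟨z, hzseg, hzfr⟩ :=
    my_inter_frontier_nonempty (convex_segment q y).isPreconnected
      ⟨y, right_mem_segment ℝ q y, hy⟩ ⟨q, left_mem_segment ℝ q y, hQsub hqQ⟩
  have hzΩ : z ∈ frontier Ω := frontier_closure_subset hzfr
  have hzq : dist z q ≤ dist q y := by
    have hsub : segment ℝ q y ⊆ Metric.closedBall q (dist q y) :=
      (convex_closedBall q (dist q y)).segment_subset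
        (Metric.mem_closedBall_self dist_nonneg)
        (Metric.mem_closedBall.mpr (dist_comm y q ▸ le_rfl))
    exact Metric.mem_closedBall.mp (hsub hzseg)
  have hDeq : frontier Ω \ Γ = D := by
    ext w
    constructor
    · rintro ⟨hw, hw2⟩
      by_contra hwD
      exact hw2 ⟨hw, hwD⟩
    · intro hw
      exact ⟨hDsub hw, fun hc => hc.2 hw⟩
  rw [hDeq] at hQdist
  have hE1 : setEDist Q Γ ≤ ENNReal.ofReal (B * (4 * dQ + dQ / 4)) := by
    have hzd : dist q z < 4 * dQ + dQ / 4 :=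
      lt_of_le_of_lt (le_of_eq_of_le (dist_comm q z) hzq) hqy'
    by_cases hzD : z ∈ D
    · have h3 : setEDist Q D ≤ ENNReal.ofReal (4 * dQ + dQ / 4) := by
        refine le_trans (le_trans (my_setEDist_le _ hqQ)
          (EMetric.infEdist_le_edist_of_mem hzD)) ?_
        rw [edist_dist]
        exact ENNReal.ofReal_le_ofReal hzd.le
      calc setEDist Q Γ ≤ ENNReal.ofReal B * setEDist Q D := hQdist.le
        _ ≤ ENNReal.ofReal B * ENNReal.ofReal (4 * dQ + dQ / 4) := by gcongr
        _ = ENNReal.ofReal (B * (4 * dQ + dQ / 4)) := (ENNReal.ofReal_mul hBpos.le).symm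
    · have hzΓ : z ∈ Γ := ⟨hzΩ, hzD⟩
      refine le_trans (le_trans (my_setEDist_le _ hqQ)
        (EMetric.infEdist_le_edist_of_mem hzΓ)) ?_
      rw [edist_dist]
      apply ENNReal.ofReal_le_ofReal
      nlinarith
  have hE2 : setEDist Q Γ < ENNReal.ofReal (9 / 2 * B * dQ) := by
    refine lt_of_le_of_lt hE1 ?_
    rw [ENNReal.ofReal_lt_ofReal_iff (by nlinarith)]
    nlinarith
  simp only [setEDist, iInf_lt_iff] at hE2
  obtain ⟨q', hq'Q, hq'⟩ := hE2
  obtain ⟨x'', hx''Γ, hx''e⟩ := EMetric.infEdist_lt_iff.mp hq'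
  have hx''d : dist q' x'' < 9 / 2 * B * dQ := edist_lt_ofReal.mp hx''e
  have hx''fr : x'' ∈ frontier Ω := hx''Γ.1
  have hx''D : x'' ∉ D := hx''Γ.2
  obtain ⟨r, hr, hball⟩ := Metric.isOpen_iff.mp hD.isOpen_compl x'' hx''D
  have hεpos : 0 < min r (B * dQ / 2) := lt_min hr (by nlinarith)
  obtain ⟨x, hxΩ, hxd⟩ :=
    Metric.mem_closure_iff.mp (frontier_subset_closure hx''fr) _ hεpos
  refine ⟨x, hxΩ, ?_, ?_⟩
  · have hx''Ω : x'' ∉ Ω := by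
      rw [hΩ.frontier_eq] at hx''fr
      exact hx''fr.2
    have hxU : x ∈ connectedComponentIn Ω x := mem_connectedComponentIn hxΩ
    obtain ⟨z', hz'seg, hz'fr⟩ :=
      my_inter_frontier_nonempty (convex_segment x x'').isPreconnected
        ⟨x, left_mem_segment ℝ x x'', hxU⟩
        ⟨x'', right_mem_segment ℝ x x'',
          fun hc => hx''Ω (connectedComponentIn_subset Ω x hc)⟩
    have hz'Ω : z' ∈ frontier Ω := my_frontier_ccIn_subset hΩ x hz'fr
    have hz'ball : z' ∈ Metric.ball x'' r := by
      have hsub : segment ℝ x x'' ⊆ Metric.closedBall x'' (dist x x'') :=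
        (convex_closedBall x'' (dist x x'')).segment_subset
          (Metric.mem_closedBall.mpr le_rfl)
          (Metric.mem_closedBall_self dist_nonneg)
      have h5 : dist z' x'' ≤ dist x x'' := Metric.mem_closedBall.mp (hsub hz'seg)
      rw [Metric.mem_ball]
      calc dist z' x'' ≤ dist x x'' := h5
        _ < r := by
            rw [dist_comm]
            exact lt_of_lt_of_le hxd (min_le_left _ _)
    exact ⟨z', hz'fr, hz'Ω, fun hc => hball hz'ball hc⟩
  · have hxx'' : dist x x'' < B * dQ / 2 := by
      rw [dist_comm]
      exact lt_of_lt_of_le hxd (min_le_right _ _)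
    have h6 : infDist x Q ≤ dist x q' := Metric.infDist_le_dist_of_mem hq'Q
    have htri : dist x q' ≤ dist x x'' + dist q' x'' := by
      rw [dist_comm q' x'']
      exact dist_triangle _ _ _
    have : infDist x Q ≤ dist x x'' + dist q' x'' := le_trans h6 htri
    nlinarith
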